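/- arXiv:2211.02085 — 2 statements merged into one kernel-verified Lean document; each statement's English description precedes it below -/
import Mathlib

section
/- Let G be a finite group, k ≥ 1, and ∅ ≠ A ⊆ G. Then for every (k−2)-dimensional simplex τ of X = Y_{A,k}, the link lk(X,τ), which is a graph, is isomorphic (as a graph) to the bipartite Cayley graph C_A. -/
open Finset

namespace BCC

/-! ### Simplicial cochain machinery.

A finite simplicial complex on a linearly ordered finite vertex type `V` is encoded as a
`Finset (Finset V)` of faces (downward closure is assumed as a hypothesis where needed;
the empty face plays the role of the `(-1)`-dimensional simplex, so that the cochain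
complex below is the *augmented* (reduced) one).

A skew-symmetric real-valued function on ordered `j`-simplices is determined by its values
on the increasingly-ordered simplices, so `C^j(X)` is encoded as the space of real functions
on the faces of cardinality `j+1`.  Thus `Cochain X m` is `C^{m-1}(X)`, and `d X m` is the
coboundary `d_{m-1} : C^{m-1}(X) → C^m(X)`; in particular `d X 0` is the augmentation
`d_{-1} : C^{-1}(X) = ℝ → C^0(X)`, `(d_{-1} a)(v) = a`.  `dStar X m` is the adjoint of
`d X m` with respect to the standard inner products `(φ, ψ) = ∑_{σ ∈ X(j)} φ(σ)ψ(σ)`,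
written out explicitly. -/

/-- `C^{m-1}(X)`: real cochains supported on the faces of cardinality `m`. -/
abbrev Cochain {V : Type*} [Fintype V] [LinearOrder V] (X : Finset (Finset V)) (m : ℕ) :
    Type _ :=
  {s : Finset V // s ∈ X ∧ s.card = m} → ℝ

section Ordered
variable {V : Type*} [Fintype V] [LinearOrder V]

/-- The sign `(-1)^i` of the vertex `v` in the increasingly ordered simplex `σ`,
where `i` is the position of `v` in `σ`. -/
noncomputable def sgn (σ : Finset V) (v : V) : ℝ :=
  (-1 : ℝ) ^ (σ.filter fun w => w < v).card

/-- The simplicial coboundary `d_{m-1} : C^{m-1}(X) → C^m(X)`,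
`(dφ)(σ) = ∑_{i} (-1)^i φ(σ_i)`. -/
noncomputable def d (X : Finset (Finset V)) (m : ℕ) :
    Cochain X m →ₗ[ℝ] Cochain X (m + 1) where
  toFun φ := fun σ => ∑ v ∈ σ.1, sgn σ.1 v *
    (if h : σ.1.erase v ∈ X ∧ (σ.1.erase v).card = m then φ ⟨σ.1.erase v, h⟩ else 0)
  map_add' φ ψ := by
    funext σ
    show (∑ v ∈ σ.1, (_ : ℝ)) = (∑ v ∈ σ.1, (_ : ℝ)) + (∑ v ∈ σ.1, (_ : ℝ))
    rw [← Finset.sum_add_distrib]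
    refine Finset.sum_congr rfl fun v hv => ?_
    split
    · show sgn σ.1 v * (φ _ + ψ _) = _; ring
    · ring
  map_smul' c φ := by
    funext σ
    show (∑ v ∈ σ.1, _) = c * (∑ v ∈ σ.1, _)
    rw [Finset.mul_sum]
    refine Finset.sum_congr rfl fun v hv => ?_
    split
    · show sgn σ.1 v * (c * φ _) = _; ring
    · ring

/-- The adjoint `d_{m-1}^* : C^m(X) → C^{m-1}(X)` of the coboundary `d X m` with respect to
the standard inner products, written out explicitly:
`(d^*ψ)(τ) = ∑_{v ∉ τ, τ ∪ {v} ∈ X} ± ψ(τ ∪ {v})`. -/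
noncomputable def dStar (X : Finset (Finset V)) (m : ℕ) :
    Cochain X (m + 1) →ₗ[ℝ] Cochain X m where
  toFun ψ := fun τ => ∑ v ∈ τ.1ᶜ, sgn (insert v τ.1) v *
    (if h : insert v τ.1 ∈ X ∧ (insert v τ.1).card = m + 1 then ψ ⟨insert v τ.1, h⟩ else 0)
  map_add' φ ψ := by
    funext τ
    show (∑ v ∈ τ.1ᶜ, (_ : ℝ)) = (∑ v ∈ τ.1ᶜ, (_ : ℝ)) + (∑ v ∈ τ.1ᶜ, (_ : ℝ))
    rw [← Finset.sum_add_distrib]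
    refine Finset.sum_congr rfl fun v hv => ?_
    split
    · show sgn _ v * (φ _ + ψ _) = _; ring
    · ring
  map_smul' c φ := by
    funext τ
    show (∑ v ∈ τ.1ᶜ, _) = c * (∑ v ∈ τ.1ᶜ, _)
    rw [Finset.mul_sum]
    refine Finset.sum_congr rfl fun v hv => ?_
    split
    · show sgn _ v * (c * φ _) = _; ring
    · ring

/-- The squared norm `‖φ‖² = ∑_{σ ∈ X(j)} φ(σ)²` of a cochain. -/
noncomputable def normSq {X : Finset (Finset V)} {m : ℕ} (φ : Cochain X m) : ℝ :=
  ∑ s, φ s ^ 2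

/-- The reduced `m`-th Laplacian `L_m = d_{m-1} d_{m-1}^* + d_m^* d_m`
acting on `C^m(X) = Cochain X (m+1)`. -/
noncomputable def Lap (X : Finset (Finset V)) (m : ℕ) :
    Cochain X (m + 1) →ₗ[ℝ] Cochain X (m + 1) :=
  (d X m) ∘ₗ (dStar X m) + (dStar X (m + 1)) ∘ₗ (d X (m + 1))

/-- The `m`-th spectral gap `μ_m(X)`: the minimal eigenvalue of the reduced `m`-th
Laplacian `L_m` acting on `C^m(X)`. -/
noncomputable def mu (X : Finset (Finset V)) (m : ℕ) : ℝ :=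
  sInf {μ : ℝ | Module.End.HasEigenvalue (Lap X m) μ}

/-- The dimension of the `j`-th reduced real cohomology `H̃^j(X;ℝ) = ker d_j / im d_{j-1}`
of the augmented cochain complex of `X`. -/
noncomputable def cohomDim (X : Finset (Finset V)) (j : ℕ) : ℕ :=
  Module.finrank ℝ
    (↥(LinearMap.ker (d X (j + 1))) ⧸
      (LinearMap.range (d X j)).comap (LinearMap.ker (d X (j + 1))).subtype)

/-! ### Links and `λ₂` of link graphs -/

/-- The vertex set of the link `lk(X,τ)` of the face `τ`. -/
def linkVerts (X : Finset (Finset V)) (τ : Finset V) : Finset V :=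
  univ.filter (fun v => v ∉ τ ∧ insert v τ ∈ X)

/-- The Dirichlet energy `‖d₀ f‖² = ∑_{{u,v} ∈ lk(X,τ)(1)} (f v - f u)²` of a function `f`
on the vertices of the link graph `lk(X,τ)` (each unordered edge counted once). -/
noncomputable def linkEnergy (X : Finset (Finset V)) (τ : Finset V) (f : V → ℝ) : ℝ :=
  (1 / 2) * ∑ u : V, ∑ v : V,
    if u ≠ v ∧ u ∉ τ ∧ v ∉ τ ∧ insert u (insert v τ) ∈ X then (f v - f u) ^ 2 else 0

/-- The second smallest eigenvalue `λ₂` of the Laplacian of the link graph `lk(X,τ)`,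
via its variational characterization: the infimum of the Rayleigh quotients
`‖d₀ f‖²/‖f‖²` over nonzero functions `f` on the link vertices with `∑_v f(v) = 0`. -/
noncomputable def linkLambda2 (X : Finset (Finset V)) (τ : Finset V) : ℝ :=
  sInf {r : ℝ | ∃ f : V → ℝ, (∀ v, v ∉ linkVerts X τ → f v = 0) ∧ (∑ v, f v) = 0 ∧
    f ≠ 0 ∧ r = linkEnergy X τ f / ∑ v, f v ^ 2}

/-- The localization `φ_τ` of a cochain `φ ∈ C^{m-1}(X)` to the link of a face `τ` with
`|τ| = m - 1` : `φ_τ(v) = φ(vτ)` (expressed through the chosen increasing orientations). -/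
noncomputable def restrictLink (X : Finset (Finset V)) {m : ℕ} (φ : Cochain X m)
    (τ : Finset V) : V → ℝ :=
  fun v => if h : v ∉ τ ∧ insert v τ ∈ X ∧ (insert v τ).card = m then
    sgn (insert v τ) v * φ ⟨insert v τ, h.2.1, h.2.2⟩ else 0

end Ordered

section Graphs
variable {V : Type*} [DecidableEq V]

/-- The link `lk(X,τ)` of a codimension-2 face, as a simple graph on its vertex set. -/
def linkGraph (X : Finset (Finset V)) (τ : Finset V) :
    SimpleGraph {v : V // v ∉ τ ∧ insert v τ ∈ X} where
  Adj u v := u ≠ v ∧ insert u.1 (insert v.1 τ) ∈ X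
  symm := ⟨by
    rintro u v ⟨h1, h2⟩
    exact ⟨h1.symm, by rwa [Finset.insert_comm] at h2⟩⟩
  loopless := ⟨fun u h => h.1 rfl⟩

/-- The bipartite Cayley graph `C_A` on `{1,2} × G` (encoded as `Fin 2 × G`), with an edge
between `(1,x₁)` and `(2,x₂)` whenever `x₁ x₂ ∈ A`. -/
def cayleyGraph (G : Type*) [Group G] [DecidableEq G] (A : Finset G) :
    SimpleGraph (Fin 2 × G) where
  Adj u v := (u.1 = 0 ∧ v.1 = 1 ∧ u.2 * v.2 ∈ A) ∨ (v.1 = 0 ∧ u.1 = 1 ∧ v.2 * u.2 ∈ A)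
  symm := ⟨by tauto⟩
  loopless := ⟨by
    rintro ⟨i, x⟩ (⟨h0, h1, -⟩ | ⟨h0, h1, -⟩) <;> rw [h0] at h1 <;> exact absurd h1 (by decide)⟩

/-- The disjoint union of `ℓ` copies of a graph `H`. -/
def copies (ℓ : ℕ) {α : Type*} (H : SimpleGraph α) : SimpleGraph (Fin ℓ × α) where
  Adj u v := u.1 = v.1 ∧ H.Adj u.2 v.2
  symm := ⟨by rintro u v ⟨h1, h2⟩; exact ⟨h1.symm, h2.symm⟩⟩
  loopless := ⟨fun u h => H.loopless.irrefl u.2 h.2⟩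

end Graphs

/-! ### The complexes `Y_{G,k}` and `Y_{A,k}` -/

/-- The balanced complex `Y_{G,k}`, i.e. the simplicial join `V_1 * ⋯ * V_{k+1}` where
`V_i = {i} × G`: its faces are exactly the subsets of `Fin (k+1) × G` containing at most one
vertex of each colour `i : Fin (k+1)`. -/
def YG (G : Type*) [Fintype G] [DecidableEq G] (k : ℕ) :
    Finset (Finset (Fin (k + 1) × G)) :=
  (univ : Finset (Finset (Fin (k + 1) × G))).filter
    (fun s => ∀ x ∈ s, ∀ y ∈ s, Prod.fst x = Prod.fst y → x = y)

/-- The balanced `k`-dimensional Cayley complex `Y_{A,k}`: the full `(k-1)`-skeleton of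
`Y_{G,k}` together with all `k`-simplices `{(1,x_1),…,(k+1,x_{k+1})}` such that
`x_1 ⋯ x_{k+1} ∈ A` (the ordered product is taken along the colours `1,…,k+1`). -/
def YA (G : Type*) [Group G] [Fintype G] [DecidableEq G] (k : ℕ) (A : Finset G) :
    Finset (Finset (Fin (k + 1) × G)) :=
  (YG G k).filter (fun s => s.card ≤ k ∨
    ∃ x : Fin (k + 1) → G, s = univ.image (fun i => (i, x i)) ∧ (List.ofFn x).prod ∈ A)

/-! ### Unitary representations, `ν(A)` and `D(G)` -/

variable {G : Type*} [Group G]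

/-- A unitary matrix representation `ρ : G → U(d)` is irreducible if `d > 0` and the only
invariant subspaces of `ℂ^d` are `⊥` and `⊤`. -/
def IsIrred {d : ℕ} (ρ : G →* Matrix.unitaryGroup (Fin d) ℂ) : Prop :=
  0 < d ∧ ∀ W : Submodule ℂ (EuclideanSpace ℂ (Fin d)),
    (∀ g : G, ∀ v ∈ W, Matrix.toEuclideanLin (ρ g : Matrix (Fin d) (Fin d) ℂ) v ∈ W) →
      W = ⊥ ∨ W = ⊤

/-- A matrix representation is nontrivial if it is not identically the identity. -/
def IsNontrivialRep {d : ℕ} (ρ : G →* Matrix.unitaryGroup (Fin d) ℂ) : Prop :=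
  ∃ g : G, (ρ g : Matrix (Fin d) (Fin d) ℂ) ≠ 1

/-- The operator (spectral) norm of a complex `d × d` matrix. -/
noncomputable def opNorm {d : ℕ} (M : Matrix (Fin d) (Fin d) ℂ) : ℝ :=
  ‖Matrix.toEuclideanCLM (𝕜 := ℂ) M‖

/-- The Fourier transform `1̂_A(ρ) = ∑_{x ∈ A} ρ(x)` of the indicator of `A` at `ρ`. -/
noncomputable def fourier {d : ℕ} (ρ : G →* Matrix.unitaryGroup (Fin d) ℂ) (A : Finset G) :
    Matrix (Fin d) (Fin d) ℂ :=
  ∑ a ∈ A, (ρ a : Matrix (Fin d) (Fin d) ℂ)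

/-- `ν(A) = max_{ρ ∈ Ĝ₊} ‖1̂_A(ρ)‖`: the supremum of the operator norms `‖∑_{x ∈ A} ρ(x)‖`
over all nontrivial irreducible unitary matrix representations of `G` (this agrees with the
maximum over any complete set `Ĝ₊` of pairwise inequivalent nontrivial irreducible unitary
representations, since equivalent irreducible unitary representations are unitarily
equivalent and hence give the same norm). -/
noncomputable def nu (G : Type*) [Group G] (A : Finset G) : ℝ :=
  sSup {x : ℝ | ∃ (d : ℕ) (ρ : G →* Matrix.unitaryGroup (Fin d) ℂ),
    IsIrred ρ ∧ IsNontrivialRep ρ ∧ x = opNorm (fourier ρ A)}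

/-- Equivalence of two unitary matrix representations: an invertible intertwiner. -/
def RepEquiv {d₁ d₂ : ℕ} (ρ₁ : G →* Matrix.unitaryGroup (Fin d₁) ℂ)
    (ρ₂ : G →* Matrix.unitaryGroup (Fin d₂) ℂ) : Prop :=
  ∃ T : Matrix (Fin d₂) (Fin d₁) ℂ, Function.Bijective T.mulVecLin ∧
    ∀ g : G, T * (ρ₁ g : Matrix (Fin d₁) (Fin d₁) ℂ) = (ρ₂ g : Matrix (Fin d₂) (Fin d₂) ℂ) * T

/-- `(dims, ρs)` is a complete family of irreducible unitary representations of `G`: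
each member is irreducible, they are pairwise inequivalent, and every irreducible unitary
matrix representation of `G` is equivalent to some member.  Such a family realizes `Ĝ`,
and the sum of the degrees of the irreducible representations is `D(G) = ∑ i, dims i`. -/
def IsCompleteIrrepFamily (G : Type*) [Group G] {ι : Type} (dims : ι → ℕ)
    (ρs : ∀ i : ι, G →* Matrix.unitaryGroup (Fin (dims i)) ℂ) : Prop :=
  (∀ i, IsIrred (ρs i)) ∧
  (∀ i j, i ≠ j → ¬ RepEquiv (ρs i) (ρs j)) ∧
  (∀ (d : ℕ) (π : G →* Matrix.unitaryGroup (Fin d) ℂ), IsIrred π → ∃ i, RepEquiv π (ρs i))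

end BCC

open BCC


namespace BCCAux

lemma split_two {ι : Type*} (L : List ι) (i j : ι) (hij : i ≠ j)
    (hi : i ∈ L) (hj : j ∈ L) :
    ∃ l1 l2 l3, L = l1 ++ i :: l2 ++ j :: l3 ∨ L = l1 ++ j :: l2 ++ i :: l3 := by
  induction L with
  | nil => simp at hi
  | cons a L ih =>
    by_cases hai : a = i
    · subst hai
      have hj' : j ∈ L := by
        rcases List.mem_cons.mp hj with h | h
        · exact absurd h hij.symm
        · exact h
      obtain ⟨s, t, hst⟩ := List.append_of_mem hj'
      exact ⟨[], s, t, Or.inl (by simp [hst])⟩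
    · by_cases haj : a = j
      · subst haj
        have hi' : i ∈ L := by
          rcases List.mem_cons.mp hi with h | h
          · exact absurd h hij
          · exact h
        obtain ⟨s, t, hst⟩ := List.append_of_mem hi'
        exact ⟨[], s, t, Or.inr (by simp [hst])⟩
      · have hi' : i ∈ L := by
          rcases List.mem_cons.mp hi with h | h
          · exact absurd h.symm hai
          · exact h
        have hj' : j ∈ L := by
          rcases List.mem_cons.mp hj with h | h
          · exact absurd h.symm haj
          · exact h
        obtain ⟨l1, l2, l3, hc⟩ := ih hi' hj'
        rcases hc with hc | hc
        · exact ⟨a :: l1, l2, l3, Or.inl (by simp [hc])⟩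
        · exact ⟨a :: l1, l2, l3, Or.inr (by simp [hc])⟩

lemma notmem_of_split {ι : Type*} {l1 l2 l3 : List ι} {p q : ι}
    (h : (l1 ++ p :: l2 ++ q :: l3).Nodup) :
    p ∉ l1 ∧ p ∉ l2 ∧ p ∉ l3 ∧ q ∉ l1 ∧ q ∉ l2 ∧ q ∉ l3 := by
  have h' : (l1 ++ (p :: (l2 ++ q :: l3))).Nodup := by simpa using h
  obtain ⟨nd1, nd2, disj⟩ := List.nodup_append'.mp h'
  have hpl1 : p ∉ l1 := fun hm => disj hm (List.mem_cons_self)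
  have hql1 : q ∉ l1 := fun hm => disj hm (by simp)
  obtain ⟨hp, nd3⟩ := List.nodup_cons.mp nd2
  obtain ⟨nd4, nd5, disj2⟩ := List.nodup_append'.mp nd3
  have hql2 : q ∉ l2 := fun hm => disj2 hm (List.mem_cons_self)
  obtain ⟨hq, _⟩ := List.nodup_cons.mp nd5
  simp only [List.mem_append, List.mem_cons] at hp
  push_neg at hp
  exact ⟨hpl1, hp.1, hp.2.2, hql1, hql2, hq⟩

set_option maxHeartbeats 2000000 in
lemma aux
    (G : Type) [Group G] [Fintype G] [DecidableEq G]
    (k : ℕ) (A : Finset G)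
    (τ : Finset (Fin (k + 1) × G)) (hτ : τ ∈ BCC.YA G k A) (hcard : τ.card + 1 = k)
    (p q : Fin (k + 1)) (hpq : p ≠ q) (hset : (τ.image Prod.fst)ᶜ = {p, q})
    (l1 l2 l3 : List (Fin (k + 1)))
    (hsplit : List.finRange (k + 1) = l1 ++ p :: l2 ++ q :: l3) :
    Nonempty (BCC.linkGraph (BCC.YA G k A) τ ≃g BCC.cayleyGraph G A) := by
  classical
  have hτG : τ ∈ BCC.YG G k := (Finset.mem_filter.mp hτ).1
  have hprop : ∀ x ∈ τ, ∀ y ∈ τ, Prod.fst x = Prod.fst y → x = y :=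
    (Finset.mem_filter.mp hτG).2
  have hPim : p ∉ τ.image Prod.fst := by
    have : p ∈ (τ.image Prod.fst)ᶜ := by rw [hset]; simp
    exact Finset.mem_compl.mp this
  have hQim : q ∉ τ.image Prod.fst := by
    have : q ∈ (τ.image Prod.fst)ᶜ := by rw [hset]; simp
    exact Finset.mem_compl.mp this
  have hτcolor : ∀ y ∈ τ, y.1 ≠ p ∧ y.1 ≠ q := by
    intro y hy
    constructor
    · intro h; exact hPim (Finset.mem_image.mpr ⟨y, hy, h⟩)
    · intro h; exact hQim (Finset.mem_image.mpr ⟨y, hy, h⟩)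
  have hcolor : ∀ c : Fin (k + 1), c ≠ p → c ≠ q → ∃ g0 : G, (c, g0) ∈ τ := by
    intro c h1 h2
    have hc : c ∈ τ.image Prod.fst := by
      by_contra hcc
      have : c ∈ (τ.image Prod.fst)ᶜ := Finset.mem_compl.mpr hcc
      rw [hset] at this
      simp only [Finset.mem_insert, Finset.mem_singleton] at this
      tauto
    obtain ⟨y, hy, hyc⟩ := Finset.mem_image.mp hc
    exact ⟨y.2, by rw [← hyc, Prod.mk.eta]; exact hy⟩
  have hex : ∀ c : Fin (k + 1), ∃ g0 : G, (c ≠ p → c ≠ q → (c, g0) ∈ τ) := by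
    intro c
    by_cases h1 : c = p
    · exact ⟨1, fun h _ => absurd h1 h⟩
    · by_cases h2 : c = q
      · exact ⟨1, fun _ h => absurd h2 h⟩
      · obtain ⟨g0, hg0⟩ := hcolor c h1 h2
        exact ⟨g0, fun _ _ => hg0⟩
  choose base hbase using hex
  obtain ⟨a, ha⟩ : ∃ x : G, x = (l1.map base).prod := ⟨_, rfl⟩
  obtain ⟨b, hb⟩ : ∃ x : G, x = (l2.map base).prod := ⟨_, rfl⟩
  obtain ⟨cc, hcc⟩ : ∃ x : G, x = (l3.map base).prod := ⟨_, rfl⟩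
  have hnd : (l1 ++ p :: l2 ++ q :: l3).Nodup := by
    rw [← hsplit]; exact List.nodup_finRange _
  obtain ⟨hpl1, hpl2, hpl3, hql1, hql2, hql3⟩ := notmem_of_split hnd
  -- the product formula
  have hprod : ∀ g h : G,
      (List.ofFn (fun c => if c = p then g else if c = q then h else base c)).prod
        = (a * g * b) * (h * cc) := by
    intro g h
    have m1 : l1.map (fun c => if c = p then g else if c = q then h else base c)
        = l1.map base := List.map_congr_left fun c hc => by
      have h1 : c ≠ p := fun e => hpl1 (e ▸ hc)
      have h2 : c ≠ q := fun e => hql1 (e ▸ hc)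
      simp [h1, h2]
    have m2 : l2.map (fun c => if c = p then g else if c = q then h else base c)
        = l2.map base := List.map_congr_left fun c hc => by
      have h1 : c ≠ p := fun e => hpl2 (e ▸ hc)
      have h2 : c ≠ q := fun e => hql2 (e ▸ hc)
      simp [h1, h2]
    have m3 : l3.map (fun c => if c = p then g else if c = q then h else base c)
        = l3.map base := List.map_congr_left fun c hc => by
      have h1 : c ≠ p := fun e => hpl3 (e ▸ hc)
      have h2 : c ≠ q := fun e => hql3 (e ▸ hc)
      simp [h1, h2]
    rw [ha, hb, hcc, List.ofFn_eq_map, hsplit]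
    simp only [List.map_append, List.map_cons, List.prod_append, List.prod_cons, m1, m2, m3]
    simp [hpq.symm, mul_assoc]
  -- the top simplex as an image
  have hSim : ∀ g h : G, insert (p, g) (insert (q, h) τ)
      = univ.image (fun c : Fin (k + 1) =>
          (c, if c = p then g else if c = q then h else base c)) := by
    intro g h
    apply Finset.ext
    rintro ⟨c, y⟩
    simp only [Finset.mem_insert, Finset.mem_image, Finset.mem_univ, true_and,
      Prod.mk.injEq]
    constructor
    · rintro (h1 | h1 | h1)
      · refine ⟨c, rfl, ?_⟩
        rw [if_pos h1.1, h1.2]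
      · have hcp : ¬ c = p := by rw [h1.1]; exact hpq.symm
        refine ⟨c, rfl, ?_⟩
        rw [if_neg hcp, if_pos h1.1, h1.2]
      · obtain ⟨h2, h3⟩ := hτcolor _ h1
        refine ⟨c, rfl, ?_⟩
        rw [if_neg h2, if_neg h3]
        have := hprop _ (hbase c h2 h3) _ h1 rfl
        exact (congrArg Prod.snd this)
    · rintro ⟨c', rfl, rfl⟩
      by_cases h1 : c' = p
      · subst h1; left; simp
      · by_cases h2 : c' = q
        · subst h2; right; left; simp [h1]
        · right; right; rw [if_neg h1, if_neg h2]; exact hbase c' h1 h2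
  have hSYG : ∀ g h : G, insert (p, g) (insert (q, h) τ) ∈ BCC.YG G k := by
    intro g h
    rw [BCC.YG, Finset.mem_filter]
    refine ⟨Finset.mem_univ _, ?_⟩
    intro x hx y hy hfst
    simp only [Finset.mem_insert] at hx hy
    rcases hx with rfl | rfl | hx <;> rcases hy with rfl | rfl | hy
    · rfl
    · exact absurd hfst hpq
    · exact absurd hfst.symm (hτcolor _ hy).1
    · exact absurd hfst.symm hpq
    · rfl
    · exact absurd hfst.symm (hτcolor _ hy).2
    · exact absurd hfst (hτcolor _ hx).1
    · exact absurd hfst (hτcolor _ hx).2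
    · exact hprop _ hx _ hy hfst
  have hScard : ∀ g h : G, (insert (p, g) (insert (q, h) τ)).card = k + 1 := by
    intro g h
    have h1 : (q, h) ∉ τ := fun hm => (hτcolor _ hm).2 rfl
    have h2 : (p, g) ∉ insert (q, h) τ := by
      simp only [Finset.mem_insert]
      rintro (he | hm)
      · exact hpq (congrArg Prod.fst he)
      · exact (hτcolor _ hm).1 rfl
    rw [Finset.card_insert_of_notMem h2, Finset.card_insert_of_notMem h1, hcard]
  have hSYA : ∀ g h : G,
      (insert (p, g) (insert (q, h) τ) ∈ BCC.YA G k A ↔ (a * g * b) * (h * cc) ∈ A) := by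
    intro g h
    rw [BCC.YA, Finset.mem_filter]
    constructor
    · rintro ⟨-, hcd | ⟨x', hx'eq, hx'A⟩⟩
      · rw [hScard] at hcd; omega
      · have hxx : x' = fun c => if c = p then g else if c = q then h else base c := by
          funext c
          have hc1 : (c, x' c) ∈ insert (p, g) (insert (q, h) τ) := by
            rw [hx'eq]; exact Finset.mem_image.mpr ⟨c, Finset.mem_univ _, rfl⟩
          have hc2 : (c, if c = p then g else if c = q then h else base c)
              ∈ insert (p, g) (insert (q, h) τ) := by
            rw [hSim g h]; exact Finset.mem_image.mpr ⟨c, Finset.mem_univ _, rfl⟩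
          have := (Finset.mem_filter.mp (hSYG g h)).2 _ hc1 _ hc2 rfl
          exact congrArg Prod.snd this
        rw [hxx, hprod] at hx'A
        exact hx'A
    · intro hmem
      refine ⟨hSYG g h, Or.inr ⟨_, hSim g h, ?_⟩⟩
      rw [hprod]
      exact hmem
  -- link vertices
  have hvert : ∀ v : Fin (k + 1) × G,
      (v ∉ τ ∧ insert v τ ∈ BCC.YA G k A) ↔ (v.1 = p ∨ v.1 = q) := by
    intro v
    constructor
    · rintro ⟨hvτ, hins⟩
      by_contra hcon
      push_neg at hcon
      obtain ⟨g0, hg0⟩ := hcolor v.1 hcon.1 hcon.2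
      have hinsG : insert v τ ∈ BCC.YG G k := (Finset.mem_filter.mp hins).1
      have := (Finset.mem_filter.mp hinsG).2 v (Finset.mem_insert_self _ _)
        (v.1, g0) (Finset.mem_insert_of_mem hg0) rfl
      rw [this] at hvτ
      exact hvτ hg0
    · intro hc
      have hvτ : v ∉ τ := by
        intro hm
        rcases hc with hc | hc
        · exact (hτcolor _ hm).1 hc
        · exact (hτcolor _ hm).2 hc
      refine ⟨hvτ, ?_⟩
      rw [BCC.YA, Finset.mem_filter]
      constructor
      · rw [BCC.YG, Finset.mem_filter]
        refine ⟨Finset.mem_univ _, ?_⟩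
        intro x hx y hy hfst
        simp only [Finset.mem_insert] at hx hy
        rcases hx with rfl | hx <;> rcases hy with rfl | hy
        · rfl
        · rcases hc with hc | hc
          · exact absurd (hfst.symm.trans hc) (hτcolor _ hy).1
          · exact absurd (hfst.symm.trans hc) (hτcolor _ hy).2
        · rcases hc with hc | hc
          · exact absurd (hfst.trans hc) (hτcolor _ hx).1
          · exact absurd (hfst.trans hc) (hτcolor _ hx).2
        · exact hprop _ hx _ hy hfst
      · left
        rw [Finset.card_insert_of_notMem hvτ, hcard]
  -- the equivalence
  let e : {v : Fin (k + 1) × G // v ∉ τ ∧ insert v τ ∈ BCC.YA G k A} ≃ Fin 2 × G :=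
    { toFun := fun v => if v.1.1 = p then (0, a * v.1.2 * b) else (1, v.1.2 * cc)
      invFun := fun w => if w.1 = 0 then
          ⟨(p, a⁻¹ * (w.2 * b⁻¹)), (hvert _).mpr (Or.inl rfl)⟩
        else ⟨(q, w.2 * cc⁻¹), (hvert _).mpr (Or.inr rfl)⟩
      left_inv := by
        intro v
        beta_reduce
        by_cases hc : v.1.1 = p
        · rw [if_pos hc, if_pos (show ((0 : Fin 2), a * v.1.2 * b).1 = 0 from rfl)]
          apply Subtype.ext
          have hv1 : v.1 = (p, v.1.2) := Prod.ext hc rfl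
          rw [hv1]
          show (p, a⁻¹ * (a * v.1.2 * b * b⁻¹)) = (p, v.1.2)
          congr 1
          group
        · have hcq : v.1.1 = q := ((hvert v.1).mp v.2).resolve_left hc
          rw [if_neg hc, if_neg (show ¬ ((1 : Fin 2), v.1.2 * cc).1 = 0 by simp)]
          apply Subtype.ext
          have hv1 : v.1 = (q, v.1.2) := Prod.ext hcq rfl
          rw [hv1]
          show (q, v.1.2 * cc * cc⁻¹) = (q, v.1.2)
          congr 1
          group
      right_inv := by
        intro w
        beta_reduce
        by_cases hw : w.1 = 0
        · rw [if_pos hw]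
          show (if p = p then ((0 : Fin 2), a * (a⁻¹ * (w.2 * b⁻¹)) * b)
              else ((1 : Fin 2), a⁻¹ * (w.2 * b⁻¹) * cc)) = w
          rw [if_pos rfl]
          refine Prod.ext hw.symm ?_
          show a * (a⁻¹ * (w.2 * b⁻¹)) * b = w.2
          group
        · have hw1 : w.1 = 1 := by omega
          rw [if_neg hw]
          show (if q = p then ((0 : Fin 2), a * (w.2 * cc⁻¹) * b)
              else ((1 : Fin 2), w.2 * cc⁻¹ * cc)) = w
          rw [if_neg hpq.symm]
          refine Prod.ext hw1.symm ?_
          show w.2 * cc⁻¹ * cc = w.2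
          group }
  have he : ∀ v : {v : Fin (k + 1) × G // v ∉ τ ∧ insert v τ ∈ BCC.YA G k A},
      e v = if v.1.1 = p then ((0 : Fin 2), a * v.1.2 * b) else (1, v.1.2 * cc) :=
    fun v => rfl
  refine ⟨⟨e, ?_⟩⟩
  intro u v
  rcases (hvert u.1).mp u.2 with hcu | hcu <;> rcases (hvert v.1).mp v.2 with hcv | hcv
  · -- both colour p : no edge on either side
    constructor
    · intro hadjc
      exfalso
      rw [he u, he v, if_pos hcu, if_pos hcv] at hadjc
      rcases hadjc with ⟨-, h01, -⟩ | ⟨-, h01, -⟩ <;> exact absurd h01 (by simp)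
    · rintro ⟨hne, hins⟩
      exfalso
      have hinsG : insert u.1 (insert v.1 τ) ∈ BCC.YG G k :=
        (Finset.mem_filter.mp hins).1
      have := (Finset.mem_filter.mp hinsG).2 u.1 (Finset.mem_insert_self _ _)
        v.1 (Finset.mem_insert_of_mem (Finset.mem_insert_self _ _)) (hcu.trans hcv.symm)
      exact hne (Subtype.ext this)
  · -- u colour p, v colour q
    have hcvp : ¬ v.1.1 = p := fun h => hpq (h ▸ hcv)
    rw [he u, he v, if_pos hcu, if_neg hcvp]
    have hu1 : u.1 = (p, u.1.2) := Prod.ext hcu rfl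
    have hv1 : v.1 = (q, v.1.2) := Prod.ext hcv rfl
    constructor
    · intro hadjc
      have hmem : (a * u.1.2 * b) * (v.1.2 * cc) ∈ A := by
        rcases hadjc with ⟨-, -, hm⟩ | ⟨h0, -, -⟩
        · exact hm
        · exact absurd h0 (by simp)
      refine ⟨?_, ?_⟩
      · intro hE
        have : u.1.1 = v.1.1 := by rw [hE]
        rw [hcu, hcv] at this
        exact hpq this
      · show insert u.1 (insert v.1 τ) ∈ BCC.YA G k A
        rw [hu1, hv1]
        exact (hSYA _ _).mpr hmem
    · rintro ⟨-, hins⟩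
      rw [hu1, hv1] at hins
      exact Or.inl ⟨rfl, rfl, (hSYA _ _).mp hins⟩
  · -- u colour q, v colour p
    have hcup : ¬ u.1.1 = p := fun h => hpq (h ▸ hcu)
    rw [he u, he v, if_neg hcup, if_pos hcv]
    have hu1 : u.1 = (q, u.1.2) := Prod.ext hcu rfl
    have hv1 : v.1 = (p, v.1.2) := Prod.ext hcv rfl
    constructor
    · intro hadjc
      have hmem : (a * v.1.2 * b) * (u.1.2 * cc) ∈ A := by
        rcases hadjc with ⟨h0, -, -⟩ | ⟨-, -, hm⟩
        · exact absurd h0 (by simp)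
        · exact hm
      refine ⟨?_, ?_⟩
      · intro hE
        have : u.1.1 = v.1.1 := by rw [hE]
        rw [hcu, hcv] at this
        exact hpq this.symm
      · show insert u.1 (insert v.1 τ) ∈ BCC.YA G k A
        rw [hu1, hv1, Finset.insert_comm]
        exact (hSYA _ _).mpr hmem
    · rintro ⟨-, hins⟩
      rw [hu1, hv1, Finset.insert_comm] at hins
      exact Or.inr ⟨rfl, rfl, (hSYA _ _).mp hins⟩
  · -- both colour q
    constructor
    · intro hadjc
      exfalso
      have h1 : ¬ u.1.1 = p := fun h => hpq (h ▸ hcu)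
      have h2 : ¬ v.1.1 = p := fun h => hpq (h ▸ hcv)
      rw [he u, he v, if_neg h1, if_neg h2] at hadjc
      rcases hadjc with ⟨h01, -, -⟩ | ⟨h01, -, -⟩ <;> exact absurd h01 (by simp)
    · rintro ⟨hne, hins⟩
      exfalso
      have hinsG : insert u.1 (insert v.1 τ) ∈ BCC.YG G k :=
        (Finset.mem_filter.mp hins).1
      have := (Finset.mem_filter.mp hinsG).2 u.1 (Finset.mem_insert_self _ _)
        v.1 (Finset.mem_insert_of_mem (Finset.mem_insert_self _ _)) (hcu.trans hcv.symm)
      exact hne (Subtype.ext this)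

end BCCAux

/-- **Claim 10 (links of `Y_{A,k}` are bipartite Cayley graphs).**  Let `G` be a finite
group, `k ≥ 1`, and `∅ ≠ A ⊆ G`.  Then for every `(k-2)`-dimensional simplex `τ` of
`X = Y_{A,k}` (i.e. `|τ| = k-1`), the link `lk(X,τ)` is isomorphic, as a graph, to the
bipartite Cayley graph `C_A`. -/
theorem link_iso_cayley
    (G : Type) [Group G] [Fintype G] [DecidableEq G]
    (k : ℕ) (hk : 1 ≤ k) (A : Finset G) (hA : A.Nonempty)
    (τ : Finset (Fin (k + 1) × G)) (hτ : τ ∈ YA G k A) (hcard : τ.card + 1 = k) :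
    Nonempty (linkGraph (YA G k A) τ ≃g cayleyGraph G A) := by
  classical
  have hτG : τ ∈ YG G k := (Finset.mem_filter.mp hτ).1
  have hprop : ∀ x ∈ τ, ∀ y ∈ τ, Prod.fst x = Prod.fst y → x = y :=
    (Finset.mem_filter.mp hτG).2
  have himg : (τ.image Prod.fst).card = τ.card := by
    apply Finset.card_image_of_injOn
    intro x hx y hy hxy
    exact hprop x hx y hy hxy
  have hcompl : (τ.image Prod.fst)ᶜ.card = 2 := by
    rw [Finset.card_compl, himg]
    simp only [Fintype.card_prod, Fintype.card_fin]
    omega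
  obtain ⟨p, q, hpq, hset⟩ := Finset.card_eq_two.mp hcompl
  have hpmem : p ∈ List.finRange (k + 1) := List.mem_finRange p
  have hqmem : q ∈ List.finRange (k + 1) := List.mem_finRange q
  obtain ⟨l1, l2, l3, hc⟩ := BCCAux.split_two (List.finRange (k + 1)) p q hpq hpmem hqmem
  rcases hc with hc | hc
  · exact BCCAux.aux G k A τ hτ hcard p q hpq hset l1 l2 l3 hc
  · exact BCCAux.aux G k A τ hτ hcard q p hpq.symm
      (by rw [hset, Finset.pair_comm]) l1 l2 l3 hc
end

section
/- Let G be a finite group and ∅ ≠ A ⊆ G. Then the second smallest Laplacian eigenvalue of the bipartite Cayley graph C_A satisfies λ₂(C_A) ≥ |A| − ν(A). Equivalently, for every φ : {1,2}×G → ℝ with Σ_v φ(v) = 0, one has Σ_{(x₁,x₂): x₁x₂ ∈ A} (φ((2,x₂)) − φ((1,x₁)))² ≥ (|A| − ν(A))·Σ_v φ(v)². -/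
open Finset

namespace BCC

/-! ### Unitary representations, `ν(A)` and `D(G)` -/

variable {G : Type*} [Group G]

section AuxProof
variable {G : Type*} [Group G]

lemma norm_toEuclideanCLM_unitary {d : ℕ} (U : Matrix.unitaryGroup (Fin d) ℂ) :
    ‖Matrix.toEuclideanCLM (𝕜 := ℂ) (U : Matrix (Fin d) (Fin d) ℂ)‖ ≤ 1 := by
  set T := Matrix.toEuclideanCLM (𝕜 := ℂ) (U : Matrix (Fin d) (Fin d) ℂ)
  have hsm : star T ∘L T = 1 := by
    have h1 : star (U : Matrix (Fin d) (Fin d) ℂ) * (U : Matrix (Fin d) (Fin d) ℂ) = 1 := U.2.1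
    have h2 : star T ∘L T = Matrix.toEuclideanCLM (𝕜 := ℂ)
        (star (U : Matrix (Fin d) (Fin d) ℂ) * (U : Matrix (Fin d) (Fin d) ℂ)) := by
      rw [map_mul, map_star]; rfl
    rw [h2, h1, map_one]
  have hn : ∀ x, ‖T x‖ = ‖x‖ :=
    (ContinuousLinearMap.norm_map_iff_adjoint_comp_self T).mpr hsm
  refine ContinuousLinearMap.opNorm_le_bound _ zero_le_one fun x => by rw [hn, one_mul]

lemma bddAbove_nuSet (A : Finset G) : BddAbove {x : ℝ | ∃ (d : ℕ)
    (ρ : G →* Matrix.unitaryGroup (Fin d) ℂ),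
    IsIrred ρ ∧ IsNontrivialRep ρ ∧ x = opNorm (fourier ρ A)} := by
  refine ⟨(A.card : ℝ), ?_⟩
  rintro x ⟨d, ρ, -, -, rfl⟩
  unfold opNorm fourier
  rw [map_sum]
  calc ‖∑ a ∈ A, Matrix.toEuclideanCLM (𝕜 := ℂ) (ρ a : Matrix (Fin d) (Fin d) ℂ)‖
      ≤ ∑ a ∈ A, ‖Matrix.toEuclideanCLM (𝕜 := ℂ) (ρ a : Matrix (Fin d) (Fin d) ℂ)‖ :=
        norm_sum_le _ _
    _ ≤ ∑ _a ∈ A, (1:ℝ) := Finset.sum_le_sum fun a _ => norm_toEuclideanCLM_unitary (ρ a)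
    _ = A.card := by simp

lemma nu_nonneg (A : Finset G) : 0 ≤ nu G A :=
  Real.sSup_nonneg (by rintro x ⟨d, ρ, -, -, rfl⟩; exact norm_nonneg _)

lemma le_nu {A : Finset G} {d : ℕ} {ρ : G →* Matrix.unitaryGroup (Fin d) ℂ}
    (h1 : IsIrred ρ) (h2 : IsNontrivialRep ρ) : opNorm (fourier ρ A) ≤ nu G A :=
  le_csSup (bddAbove_nuSet A) ⟨d, ρ, h1, h2, rfl⟩

variable {G : Type*} [Group G]
variable {E : Type*} [NormedAddCommGroup E] [InnerProductSpace ℂ E]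

/-- Restriction of a unitary representation to an invariant subspace. -/
noncomputable def resIso (ρ : G →* (E ≃ₗᵢ[ℂ] E)) (W : Submodule ℂ E)
    (hW : ∀ g : G, ∀ v ∈ W, ρ g v ∈ W) (g : G) : W ≃ₗᵢ[ℂ] W where
  toFun v := ⟨ρ g v, hW g v v.2⟩
  invFun v := ⟨ρ g⁻¹ v, hW g⁻¹ v v.2⟩
  map_add' u v := by ext; simp
  map_smul' c v := by ext; simp
  left_inv v := by
    ext
    show (ρ g⁻¹) ((ρ g) (v : E)) = (v : E)
    have : (ρ g⁻¹) ((ρ g) (v : E)) = (ρ g⁻¹ * ρ g) (v : E) := rfl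
    rw [this, ← map_mul, inv_mul_cancel, map_one, LinearIsometryEquiv.coe_one, id_eq]
  right_inv v := by
    ext
    show (ρ g) ((ρ g⁻¹) (v : E)) = (v : E)
    have : (ρ g) ((ρ g⁻¹) (v : E)) = (ρ g * ρ g⁻¹) (v : E) := rfl
    rw [this, ← map_mul, mul_inv_cancel, map_one, LinearIsometryEquiv.coe_one, id_eq]
  norm_map' v := by
    show ‖(⟨ρ g v, _⟩ : W)‖ = ‖v‖
    rw [show ‖(⟨ρ g v, hW g v v.2⟩ : W)‖ = ‖(ρ g) (v : E)‖ from rfl,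
      LinearIsometryEquiv.norm_map]
    rfl

@[simp] lemma resIso_apply_coe (ρ : G →* (E ≃ₗᵢ[ℂ] E)) (W : Submodule ℂ E)
    (hW : ∀ g : G, ∀ v ∈ W, ρ g v ∈ W) (g : G) (v : W) :
    (resIso ρ W hW g v : E) = ρ g (v : E) := rfl


variable [FiniteDimensional ℂ E]

lemma irred_case (ρ : G →* (E ≃ₗᵢ[ℂ] E)) (A : Finset G)
    (W : Submodule ℂ E) (hW : ∀ g : G, ∀ v ∈ W, ρ g v ∈ W)
    (hfix : ∀ v ∈ W, (∀ g : G, ρ g v = v) → v = 0)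
    (hirr : ∀ U : Submodule ℂ E, U ≤ W → (∀ g : G, ∀ u ∈ U, ρ g u ∈ U) → U = ⊥ ∨ U = W)
    (v : E) (hv : v ∈ W) : ‖∑ a ∈ A, ρ a v‖ ≤ nu G A * ‖v‖ := by
  rcases eq_or_ne v 0 with rfl | hv0
  · simp [mul_nonneg (nu_nonneg A) (norm_nonneg (0 : E))]
  set d := Module.finrank ℂ W with hd
  set e : W ≃ₗᵢ[ℂ] EuclideanSpace ℂ (Fin d) := (stdOrthonormalBasis ℂ W).repr with he
  set r : G → (W ≃ₗᵢ[ℂ] W) := resIso ρ W hW with hr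
  set τ : G → (EuclideanSpace ℂ (Fin d) ≃ₗᵢ[ℂ] EuclideanSpace ℂ (Fin d)) :=
    fun g => (e.symm.trans (r g)).trans e with hτ
  set fm : G → (EuclideanSpace ℂ (Fin d) →ₗ[ℂ] EuclideanSpace ℂ (Fin d)) :=
    fun g => (τ g).toLinearEquiv.toLinearMap with hfm
  have hfm_apply : ∀ g x, fm g x = e (r g (e.symm x)) := fun g x => rfl
  set bE := EuclideanSpace.basisFun (Fin d) ℂ with hbE
  set M : G → Matrix (Fin d) (Fin d) ℂ :=
    fun g => LinearMap.toMatrixOrthonormal bE (fm g) with hM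
  have hadj : ∀ g, LinearMap.adjoint (fm g) = (τ g).symm.toLinearEquiv.toLinearMap := by
    intro g
    symm
    rw [LinearMap.eq_adjoint_iff]
    intro x y
    show inner ℂ ((τ g).symm x) y = inner ℂ x ((τ g) y)
    conv_lhs => rw [← (τ g).inner_map_map ((τ g).symm x) y]
    rw [(τ g).apply_symm_apply]
  have hMunit : ∀ g, M g ∈ Matrix.unitaryGroup (Fin d) ℂ := by
    intro g
    rw [Matrix.mem_unitaryGroup_iff']
    have h1 : star (M g) = LinearMap.toMatrixOrthonormal bE (star (fm g)) :=
      (map_star (LinearMap.toMatrixOrthonormal bE) (fm g)).symm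
    rw [h1, ← map_mul, LinearMap.star_eq_adjoint, hadj]
    have h2 : (τ g).symm.toLinearEquiv.toLinearMap * fm g = 1 := by
      refine LinearMap.ext fun x => ?_
      show (τ g).symm ((τ g) x) = x
      exact (τ g).symm_apply_apply x
    rw [h2, map_one]
  have hMmul : ∀ g h : G, M (g * h) = M g * M h := by
    intro g h
    rw [hM, ← map_mul]
    show LinearMap.toMatrixOrthonormal bE (fm (g*h)) = LinearMap.toMatrixOrthonormal bE (fm g * fm h)
    congr 1
    refine LinearMap.ext fun x => ?_
    show e (r (g*h) (e.symm x)) = fm g (fm h x)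
    rw [hfm_apply, hfm_apply, e.symm_apply_apply]
    congr 1
    ext
    show ρ (g*h) ((e.symm x : W) : E) = ρ g ((r h (e.symm x) : W) : E)
    rw [map_mul]
    rfl
  set σ : G →* Matrix.unitaryGroup (Fin d) ℂ :=
    MonoidHom.mk' (fun g => ⟨M g, hMunit g⟩) (fun g h => Subtype.ext (hMmul g h)) with hσ
  have hlin : ∀ g, Matrix.toEuclideanLin (M g) = fm g := by
    intro g
    have h1 : Matrix.toEuclideanCLM (𝕜 := ℂ) (M g) =
        LinearMap.toContinuousLinearMap ((LinearMap.toMatrixOrthonormal bE).symm (M g)) := rfl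
    have h2 : (LinearMap.toMatrixOrthonormal bE).symm (M g) = fm g :=
      StarAlgEquiv.symm_apply_apply _ _
    rw [← Matrix.coe_toEuclideanCLM_eq_toEuclideanLin, h1, h2]
    rfl
  have hnontrivW : Nontrivial W :=
    ⟨⟨⟨v, hv⟩, 0, fun h => hv0 (by simpa using congrArg Subtype.val h)⟩⟩
  have hd0 : 0 < d := Module.finrank_pos
  have hIrr : IsIrred σ := by
    refine ⟨hd0, fun U hU => ?_⟩
    set U' : Submodule ℂ E := U.map (W.subtype.comp (e.symm.toLinearEquiv.toLinearMap)) with hU'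
    have hU'W : U' ≤ W := by
      rintro x ⟨u, hu, rfl⟩
      exact (e.symm u).2
    have hU'inv : ∀ g : G, ∀ x ∈ U', ρ g x ∈ U' := by
      rintro g x ⟨u, hu, rfl⟩
      refine ⟨fm g u, ?_, ?_⟩
      · have := hU g u hu
        have hcoe : ((σ g : Matrix (Fin d) (Fin d) ℂ)) = M g := rfl
        rwa [hcoe, hlin g] at this
      · show ((e.symm (fm g u) : W) : E) = ρ g ((e.symm u : W) : E)
        rw [hfm_apply, e.symm_apply_apply]
        rfl
    rcases hirr U' hU'W hU'inv with h | h
    · left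
      ext u
      simp only [Submodule.mem_bot]
      constructor
      · intro hu
        have hmem : ((e.symm u : W) : E) ∈ U' := ⟨u, hu, rfl⟩
        rw [h, Submodule.mem_bot] at hmem
        have : e.symm u = 0 := Subtype.ext hmem
        have := congrArg e this
        rwa [e.apply_symm_apply, map_zero] at this
      · rintro rfl; exact zero_mem U
    · right
      ext x
      simp only [Submodule.mem_top, iff_true]
      have hmem : ((e.symm x : W) : E) ∈ U' := by rw [h]; exact (e.symm x).2
      obtain ⟨u, hu, hux⟩ := hmem
      have h1 : e.symm u = e.symm x := Subtype.ext hux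
      have h2 : u = x := by
        have := congrArg e h1
        rwa [e.apply_symm_apply, e.apply_symm_apply] at this
      rwa [← h2]
  have hNt : IsNontrivialRep σ := by
    by_contra h
    rw [IsNontrivialRep] at h
    push_neg at h
    refine hv0 (hfix v hv fun g => ?_)
    have h1 : fm g = Matrix.toEuclideanLin (1 : Matrix (Fin d) (Fin d) ℂ) := by
      rw [← hlin g]
      have hcoe : ((σ g : Matrix (Fin d) (Fin d) ℂ)) = M g := rfl
      rw [← hcoe, h g]
    have h2 : ∀ x, fm g x = x := by
      intro x
      rw [h1]
      have : Matrix.toEuclideanLin (1 : Matrix (Fin d) (Fin d) ℂ) =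
          Matrix.toEuclideanCLM (𝕜 := ℂ) (1 : Matrix (Fin d) (Fin d) ℂ) :=
        (Matrix.coe_toEuclideanCLM_eq_toEuclideanLin _).symm
      rw [this, map_one]
      rfl
    have h3 := h2 (e ⟨v, hv⟩)
    rw [hfm_apply, e.symm_apply_apply] at h3
    have h4 : r g ⟨v, hv⟩ = ⟨v, hv⟩ := e.injective h3
    have := congrArg Subtype.val h4
    exact this
  have hSmem : (∑ a ∈ A, ρ a v) ∈ W := Submodule.sum_mem W (fun a _ => hW a v hv)
  have key : (e ⟨∑ a ∈ A, ρ a v, hSmem⟩ : EuclideanSpace ℂ (Fin d)) =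
      Matrix.toEuclideanCLM (𝕜 := ℂ) (fourier σ A) (e ⟨v, hv⟩) := by
    have hc : Matrix.toEuclideanCLM (𝕜 := ℂ) (fourier σ A) (e ⟨v, hv⟩) =
        Matrix.toEuclideanLin (fourier σ A) (e ⟨v, hv⟩) := rfl
    rw [hc]
    unfold fourier
    rw [map_sum]
    have hsum : (⟨∑ a ∈ A, ρ a v, hSmem⟩ : W) = ∑ a ∈ A, r a ⟨v, hv⟩ := by
      ext
      rw [AddSubmonoidClass.coe_finset_sum]
      rfl
    rw [hsum, map_sum, LinearMap.sum_apply]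
    refine Finset.sum_congr rfl fun a _ => ?_
    have hcoe : ((σ a : Matrix (Fin d) (Fin d) ℂ)) = M a := rfl
    show e (r a ⟨v, hv⟩) = Matrix.toEuclideanLin ((σ a : Matrix (Fin d) (Fin d) ℂ)) (e ⟨v, hv⟩)
    rw [hcoe, hlin, hfm_apply, e.symm_apply_apply]
  have hnorm1 : ‖∑ a ∈ A, ρ a v‖ = ‖(e ⟨∑ a ∈ A, ρ a v, hSmem⟩ : EuclideanSpace ℂ (Fin d))‖ := by
    rw [e.norm_map]
    rfl
  have hnorm2 : ‖(e ⟨v, hv⟩ : EuclideanSpace ℂ (Fin d))‖ = ‖v‖ := by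
    rw [e.norm_map]
    rfl
  rw [hnorm1, key]
  calc ‖Matrix.toEuclideanCLM (𝕜 := ℂ) (fourier σ A) (e ⟨v, hv⟩)‖
      ≤ ‖Matrix.toEuclideanCLM (𝕜 := ℂ) (fourier σ A)‖ * ‖(e ⟨v, hv⟩ : EuclideanSpace ℂ (Fin d))‖ :=
        ContinuousLinearMap.le_opNorm _ _
    _ = opNorm (fourier σ A) * ‖v‖ := by rw [hnorm2]; rfl
    _ ≤ nu G A * ‖v‖ := mul_le_mul_of_nonneg_right (le_nu hIrr hNt) (norm_nonneg v)

lemma key_aux (ρ : G →* (E ≃ₗᵢ[ℂ] E)) (A : Finset G) :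
    ∀ (n : ℕ) (W : Submodule ℂ E), Module.finrank ℂ W = n →
    (∀ g : G, ∀ v ∈ W, ρ g v ∈ W) →
    (∀ v ∈ W, (∀ g : G, ρ g v = v) → v = 0) →
    ∀ v ∈ W, ‖∑ a ∈ A, ρ a v‖ ≤ nu G A * ‖v‖ := by
  intro n
  induction n using Nat.strong_induction_on with
  | _ n IH =>
  intro W hrank hW hfix v hv
  by_cases hirr : ∀ U : Submodule ℂ E, U ≤ W → (∀ g : G, ∀ u ∈ U, ρ g u ∈ U) → U = ⊥ ∨ U = W
  · exact irred_case ρ A W hW hfix hirr v hv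
  · push_neg at hirr
    obtain ⟨U, hUW, hUinv, hUbot, hUne⟩ := hirr
    have horthinv : ∀ g : G, ∀ u ∈ Uᗮ, ρ g u ∈ Uᗮ := by
      intro g u hu
      rw [Submodule.mem_orthogonal] at hu ⊢
      intro x hx
      have hxx : ρ g (ρ g⁻¹ x) = x := by
        rw [show ρ g (ρ g⁻¹ x) = (ρ g * ρ g⁻¹) x from rfl, ← map_mul, mul_inv_cancel,
          map_one, LinearIsometryEquiv.coe_one, id_eq]
      have h2 : (inner ℂ x (ρ g u) : ℂ) = inner ℂ (ρ g⁻¹ x) u := by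
        conv_lhs => rw [← hxx]
        rw [(ρ g).inner_map_map]
      rw [h2]
      exact hu _ (hUinv g⁻¹ x hx)
    set W2 := W ⊓ Uᗮ with hW2
    have hW2W : W2 ≤ W := inf_le_left
    have hW2inv : ∀ g : G, ∀ u ∈ W2, ρ g u ∈ W2 := fun g u hu =>
      ⟨hW g u hu.1, horthinv g u hu.2⟩
    have hU_lt : U < W := lt_of_le_of_ne hUW hUne
    have hrU : Module.finrank ℂ U < n := hrank ▸ Submodule.finrank_lt_finrank_of_lt hU_lt
    have hW2_lt : W2 < W := by
      refine lt_of_le_of_ne hW2W (fun h => hUbot ?_)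
      have hWU : W ≤ Uᗮ := fun x hx => by
        have : x ∈ W2 := h ▸ hx
        exact this.2
      have h1 : U ≤ U ⊓ Uᗮ := le_inf le_rfl (hUW.trans hWU)
      exact le_bot_iff.mp (h1.trans (Submodule.orthogonal_disjoint U).le_bot)
    have hrW2 : Module.finrank ℂ W2 < n := hrank ▸ Submodule.finrank_lt_finrank_of_lt hW2_lt
    set v₁ : E := ((U.orthogonalProjectionOnto v : U) : E) with hv₁
    set v₂ : E := v - v₁ with hv₂
    have hv₁U : v₁ ∈ U := (U.orthogonalProjectionOnto v).2
    have hv₂o : v₂ ∈ Uᗮ := Submodule.sub_starProjection_mem_orthogonal (K := U) v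
    have hv₂W2 : v₂ ∈ W2 := ⟨W.sub_mem hv (hUW hv₁U), hv₂o⟩
    have hsplit : v = v₁ + v₂ := by rw [hv₂]; abel
    have h₁ := IH (Module.finrank ℂ U) hrU U rfl hUinv
      (fun w hw hfw => hfix w (hUW hw) hfw) v₁ hv₁U
    have h₂ := IH (Module.finrank ℂ W2) hrW2 W2 rfl hW2inv
      (fun w hw hfw => hfix w (hW2W hw) hfw) v₂ hv₂W2
    have hs₁U : (∑ a ∈ A, ρ a v₁) ∈ U := Submodule.sum_mem U fun a _ => hUinv a v₁ hv₁U
    have hs₂o : (∑ a ∈ A, ρ a v₂) ∈ Uᗮ := Submodule.sum_mem _ fun a _ => (hW2inv a v₂ hv₂W2).2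
    have hsum : ∑ a ∈ A, ρ a v = (∑ a ∈ A, ρ a v₁) + (∑ a ∈ A, ρ a v₂) := by
      rw [← Finset.sum_add_distrib]
      refine Finset.sum_congr rfl fun a _ => ?_
      rw [hsplit, map_add]
    have hinner1 : (inner ℂ (∑ a ∈ A, ρ a v₁) (∑ a ∈ A, ρ a v₂) : ℂ) = 0 :=
      Submodule.inner_right_of_mem_orthogonal hs₁U hs₂o
    have hinner2 : (inner ℂ v₁ v₂ : ℂ) = 0 :=
      Submodule.inner_right_of_mem_orthogonal hv₁U hv₂o
    have hn1 : ‖∑ a ∈ A, ρ a v‖ ^ 2 = ‖∑ a ∈ A, ρ a v₁‖ ^ 2 + ‖∑ a ∈ A, ρ a v₂‖ ^ 2 := by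
      rw [hsum, norm_add_sq (𝕜 := ℂ), hinner1]
      simp
    have hn2 : ‖v‖ ^ 2 = ‖v₁‖ ^ 2 + ‖v₂‖ ^ 2 := by
      rw [hsplit, norm_add_sq (𝕜 := ℂ), hinner2]
      simp
    have hν : 0 ≤ nu G A := nu_nonneg A
    have a1 : ‖∑ a ∈ A, ρ a v₁‖ ^ 2 ≤ (nu G A * ‖v₁‖) ^ 2 :=
      pow_le_pow_left₀ (norm_nonneg _) h₁ 2
    have a2 : ‖∑ a ∈ A, ρ a v₂‖ ^ 2 ≤ (nu G A * ‖v₂‖) ^ 2 :=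
      pow_le_pow_left₀ (norm_nonneg _) h₂ 2
    have hS2 : ‖∑ a ∈ A, ρ a v‖ ^ 2 ≤ (nu G A * ‖v‖) ^ 2 := by
      rw [hn1]
      calc ‖∑ a ∈ A, ρ a v₁‖ ^ 2 + ‖∑ a ∈ A, ρ a v₂‖ ^ 2
          ≤ (nu G A * ‖v₁‖) ^ 2 + (nu G A * ‖v₂‖) ^ 2 := add_le_add a1 a2
        _ = (nu G A) ^ 2 * (‖v₁‖ ^ 2 + ‖v₂‖ ^ 2) := by ring
        _ = (nu G A * ‖v‖) ^ 2 := by rw [← hn2]; ring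
    calc ‖∑ a ∈ A, ρ a v‖ = Real.sqrt (‖∑ a ∈ A, ρ a v‖ ^ 2) :=
          (Real.sqrt_sq (norm_nonneg _)).symm
      _ ≤ Real.sqrt ((nu G A * ‖v‖) ^ 2) := Real.sqrt_le_sqrt hS2
      _ = nu G A * ‖v‖ := Real.sqrt_sq (mul_nonneg hν (norm_nonneg _))

section Regular
variable (G : Type*) [Group G] [Fintype G] [DecidableEq G]

/-- The sum functional on `EuclideanSpace ℂ G`. -/
noncomputable def sumFun : EuclideanSpace ℂ G →ₗ[ℂ] ℂ where
  toFun u := ∑ x, u x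
  map_add' u v := by
    show ∑ x, (u x + v x) = _
    rw [Finset.sum_add_distrib]
  map_smul' c u := by
    show ∑ x, c * u x = c * ∑ x, u x
    rw [Finset.mul_sum]

/-- The left regular representation of `G` on `EuclideanSpace ℂ G`. -/
noncomputable def regHom : G →* (EuclideanSpace ℂ G ≃ₗᵢ[ℂ] EuclideanSpace ℂ G) where
  toFun g := LinearIsometryEquiv.piLpCongrLeft 2 ℂ ℂ (Equiv.mulLeft g)
  map_one' := by
    refine LinearIsometryEquiv.ext fun u => ?_
    refine PiLp.ext fun x => ?_
    show u (1⁻¹ * x) = u x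
    exact congrArg u (by rw [inv_one, one_mul])
  map_mul' g h := by
    refine LinearIsometryEquiv.ext fun u => ?_
    refine PiLp.ext fun x => ?_
    show u ((Equiv.mulLeft (g*h)).symm x) =
      (LinearIsometryEquiv.piLpCongrLeft 2 ℂ ℂ (Equiv.mulLeft h))
        u ((Equiv.mulLeft g).symm x)
    show u ((g*h)⁻¹ * x) = u (h⁻¹ * (g⁻¹ * x))
    exact congrArg u (by rw [mul_inv_rev, mul_assoc])

variable {G}

lemma regHom_apply (g : G) (u : EuclideanSpace ℂ G) (x : G) :
    regHom G g u x = u (g⁻¹ * x) := rfl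

lemma reg_bound (A : Finset G) (w : EuclideanSpace ℂ G) (hw : ∑ x, w x = 0) :
    ‖∑ a ∈ A, regHom G a w‖ ≤ nu G A * ‖w‖ := by
  have hn : (0:ℝ) < Fintype.card G := by
    have : Nonempty G := ⟨1⟩
    exact_mod_cast Fintype.card_pos
  refine key_aux (regHom G) A (Module.finrank ℂ (LinearMap.ker (sumFun G))) _ rfl ?_ ?_ w hw
  · intro g v hv
    rw [LinearMap.mem_ker] at hv ⊢
    show ∑ x, regHom G g v x = 0
    have : ∑ x, regHom G g v x = ∑ x, v x := by
      simp only [regHom_apply]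
      rw [← Equiv.sum_comp (Equiv.mulLeft g) (fun x => v (g⁻¹ * x))]
      refine Finset.sum_congr rfl fun x _ => ?_
      show v (g⁻¹ * (g * x)) = v x
      rw [inv_mul_cancel_left]
    rw [this]
    exact hv
  · intro v hv hfixv
    rw [LinearMap.mem_ker] at hv
    have h1 : ∀ y : G, v y = v 1 := by
      intro y
      have h0 := congrArg (fun w : EuclideanSpace ℂ G => w y) (hfixv y)
      show v y = v 1
      rw [← h0]
      show v (y⁻¹ * y) = v 1
      rw [inv_mul_cancel]
    have h2 : (Fintype.card G : ℂ) * v 1 = 0 := by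
      have hs : ∑ x : G, v x = (Fintype.card G : ℂ) * v 1 := by
        rw [Finset.sum_congr rfl (fun x _ => h1 x)]
        simp [mul_comm]
      rw [← hs]
      exact hv
    have h3 : v 1 = 0 := by
      have hcne : (Fintype.card G : ℂ) ≠ 0 := by
        exact_mod_cast ne_of_gt (show (0:ℝ) < Fintype.card G from hn)
      exact (mul_eq_zero.mp h2).resolve_left hcne
    refine PiLp.ext fun x => ?_
    rw [h1 x, h3]
    rfl

end Regular

section Cross
variable {G : Type*} [Group G] [Fintype G] [DecidableEq G]

lemma inner_reindex (A : Finset G) (x₁ : G) (F : G → ℝ) :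
    ∑ x₂ : G, (if x₁ * x₂ ∈ A then F x₂ else 0) = ∑ a ∈ A, F (x₁⁻¹ * a) := by
  rw [← Equiv.sum_comp (Equiv.mulLeft x₁⁻¹)
    (fun x₂ => if x₁ * x₂ ∈ A then F x₂ else 0)]
  simp only [Equiv.coe_mulLeft, mul_inv_cancel_left]
  rw [Finset.sum_ite_mem, Finset.univ_inter]

lemma outer_reindex (A : Finset G) (x₂ : G) (F : G → ℝ) :
    ∑ x₁ : G, (if x₁ * x₂ ∈ A then F x₁ else 0) = ∑ a ∈ A, F (a * x₂⁻¹) := by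
  rw [← Equiv.sum_comp (Equiv.mulRight x₂⁻¹)
    (fun x₁ => if x₁ * x₂ ∈ A then F x₁ else 0)]
  simp only [Equiv.coe_mulRight, inv_mul_cancel_right]
  rw [Finset.sum_ite_mem, Finset.univ_inter]

lemma rowsum_const (A : Finset G) (x₁ : G) (r : ℝ) :
    ∑ x₂ : G, (if x₁ * x₂ ∈ A then r else 0) = A.card * r := by
  rw [inner_reindex A x₁ (fun _ => r), Finset.sum_const, nsmul_eq_mul]

lemma colsum_const (A : Finset G) (x₂ : G) (r : ℝ) :
    ∑ x₁ : G, (if x₁ * x₂ ∈ A then r else 0) = A.card * r := by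
  rw [outer_reindex A x₂ (fun _ => r), Finset.sum_const, nsmul_eq_mul]

lemma cross_bound (A : Finset G) (f g : G → ℝ)
    (hf : ∑ x, f x = 0) (hg : ∑ x, g x = 0) :
    ∑ x₁ : G, ∑ x₂ : G, (if x₁ * x₂ ∈ A then f x₁ * g x₂ else 0) ≤
      nu G A * (Real.sqrt (∑ x, f x ^ 2) * Real.sqrt (∑ x, g x ^ 2)) := by
  classical
  set u : EuclideanSpace ℂ G := (WithLp.equiv 2 (G → ℂ)).symm (fun x => (f x : ℂ)) with hu
  set w : EuclideanSpace ℂ G := (WithLp.equiv 2 (G → ℂ)).symm (fun x => (g x⁻¹ : ℂ)) with hwdef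
  have hux : ∀ x, u x = (f x : ℂ) := fun x => rfl
  have hwx : ∀ x, w x = (g x⁻¹ : ℂ) := fun x => rfl
  have hinvsum : ∀ F : G → ℝ, ∑ x : G, F x⁻¹ = ∑ x : G, F x := by
    intro F
    exact Equiv.sum_comp (Equiv.inv G) F
  have hwsum : ∑ x, w x = 0 := by
    simp only [hwx]
    have h0 : (∑ x : G, g x⁻¹) = 0 := (hinvsum g).trans hg
    exact_mod_cast congrArg (fun r : ℝ => (r : ℂ)) h0
  set T : EuclideanSpace ℂ G := ∑ a ∈ A, regHom G a w with hT
  have hTle : ‖T‖ ≤ nu G A * ‖w‖ := reg_bound A w hwsum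
  have hTx : ∀ x : G, T x = ∑ a ∈ A, (g (x⁻¹ * a) : ℂ) := by
    intro x
    have h1 : T x = ∑ a ∈ A, (regHom G a w) x := by
      rw [hT, WithLp.ofLp_sum]
      exact Finset.sum_apply x A (fun a => (regHom G a w).ofLp)
    rw [h1]
    refine Finset.sum_congr rfl fun a _ => ?_
    rw [regHom_apply, hwx, mul_inv_rev, inv_inv]
  have hre : ∀ x : G, ∑ x₂ : G, (if x * x₂ ∈ A then f x * g x₂ else 0)
      = f x * ∑ a ∈ A, g (x⁻¹ * a) := by
    intro x
    rw [inner_reindex A x (fun x₂ => f x * g x₂), Finset.mul_sum]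
  have hinner : (inner ℂ u T : ℂ) =
      ((∑ x₁ : G, ∑ x₂ : G, (if x₁ * x₂ ∈ A then f x₁ * g x₂ else 0) : ℝ) : ℂ) := by
    have hL : (inner ℂ u T : ℂ) = ∑ x : G, ((f x * ∑ a ∈ A, g (x⁻¹ * a) : ℝ) : ℂ) := by
      rw [PiLp.inner_apply]
      refine Finset.sum_congr rfl fun x _ => ?_
      rw [show (inner ℂ (u x) (T x) : ℂ) = (starRingEnd ℂ) (u x) * T x from RCLike.inner_apply' _ _, hux, hTx,
        Complex.conj_ofReal]
      push_cast
      ring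
    rw [hL, ← Complex.ofReal_sum]
    norm_cast
    exact (Finset.sum_congr rfl fun x _ => hre x).symm
  have hnorm_u : ‖u‖ = Real.sqrt (∑ x, f x ^ 2) := by
    rw [EuclideanSpace.norm_eq]
    congr 1
    refine Finset.sum_congr rfl fun x _ => ?_
    rw [hux, Complex.norm_real, Real.norm_eq_abs, sq_abs]
  have hnorm_w : ‖w‖ = Real.sqrt (∑ x, g x ^ 2) := by
    rw [EuclideanSpace.norm_eq]
    congr 1
    rw [show ∑ x : G, ‖w x‖ ^ 2 = ∑ x : G, g x⁻¹ ^ 2 from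
      Finset.sum_congr rfl fun x _ => by rw [hwx, Complex.norm_real, Real.norm_eq_abs, sq_abs]]
    exact hinvsum (fun y => g y ^ 2)
  calc ∑ x₁ : G, ∑ x₂ : G, (if x₁ * x₂ ∈ A then f x₁ * g x₂ else 0)
      = RCLike.re (inner ℂ u T : ℂ) := by rw [hinner]; exact (Complex.ofReal_re _).symm
    _ ≤ ‖(inner ℂ u T : ℂ)‖ := RCLike.re_le_norm _
    _ ≤ ‖u‖ * ‖T‖ := norm_inner_le_norm u T
    _ ≤ ‖u‖ * (nu G A * ‖w‖) :=
        mul_le_mul_of_nonneg_left hTle (norm_nonneg u)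
    _ = nu G A * (Real.sqrt (∑ x, f x ^ 2) * Real.sqrt (∑ x, g x ^ 2)) := by
        rw [hnorm_u, hnorm_w]; ring

end Cross

section Final
variable {G : Type*} [Group G] [Fintype G] [DecidableEq G]

lemma col_reindex (h : G → ℝ) (a : G) : ∑ x₁ : G, h (x₁⁻¹ * a) = ∑ y, h y :=
  Equiv.sum_comp ((Equiv.inv G).trans (Equiv.mulRight a)) h

lemma double_swap (A : Finset G) (h : G → ℝ) :
    ∑ x₁ : G, ∑ a ∈ A, h (x₁⁻¹ * a) = (A.card : ℝ) * ∑ y, h y := by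
  rw [Finset.sum_comm, Finset.sum_congr rfl fun a _ => col_reindex h a,
    Finset.sum_const, nsmul_eq_mul]

theorem cayley_spectral_gap_main
    (A : Finset G) (φ : Fin 2 × G → ℝ) (hsum : ∑ v, φ v = 0) :
    ((A.card : ℝ) - nu G A) * ∑ v, φ v ^ 2 ≤
      ∑ x₁ : G, ∑ x₂ : G, if x₁ * x₂ ∈ A then (φ (1, x₂) - φ (0, x₁)) ^ 2 else 0 := by
  classical
  set f : G → ℝ := fun x => φ (0, x) with hfdef
  set g : G → ℝ := fun x => φ (1, x) with hgdef
  have hsplit_sum : ∑ v, φ v = (∑ x, f x) + (∑ x, g x) := by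
    rw [Fintype.sum_prod_type, Fin.sum_univ_two]
  have hsplit_sq : ∑ v, φ v ^ 2 = (∑ x, f x ^ 2) + (∑ x, g x ^ 2) := by
    rw [Fintype.sum_prod_type, Fin.sum_univ_two]
  obtain ⟨n, hn⟩ : ∃ n : ℝ, n = (Fintype.card G : ℝ) := ⟨_, rfl⟩
  have hnpos : 0 < n := by
    have h1 : Nonempty G := ⟨1⟩
    have h2 : 0 < Fintype.card G := Fintype.card_pos
    rw [hn]
    exact_mod_cast h2
  obtain ⟨S, hS⟩ : ∃ S : ℝ, S = ∑ x, f x := ⟨_, rfl⟩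
  have hgsum : ∑ x, g x = -S := by
    rw [hsplit_sum] at hsum
    rw [hS]
    linarith
  obtain ⟨c, hc⟩ : ∃ c : ℝ, c = S / n := ⟨_, rfl⟩
  obtain ⟨f₀, hf0⟩ : ∃ f₀ : G → ℝ, f₀ = fun x => f x - c := ⟨_, rfl⟩
  obtain ⟨g₀, hg0⟩ : ∃ g₀ : G → ℝ, g₀ = fun x => g x + c := ⟨_, rfl⟩
  have hsumf₀ : ∑ x, f₀ x = 0 := by
    simp only [hf0]
    rw [Finset.sum_sub_distrib, Finset.sum_const, Finset.card_univ, nsmul_eq_mul, ← hS, ← hn, hc]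
    field_simp
    ring
  have hsumg₀ : ∑ x, g₀ x = 0 := by
    simp only [hg0]
    rw [Finset.sum_add_distrib, Finset.sum_const, Finset.card_univ, nsmul_eq_mul, hgsum, ← hn, hc]
    field_simp
    ring
  obtain ⟨P, hP⟩ : ∃ P : ℝ, P = ∑ x, f₀ x ^ 2 := ⟨_, rfl⟩
  obtain ⟨Q, hQ⟩ : ∃ Q : ℝ, Q = ∑ x, g₀ x ^ 2 := ⟨_, rfl⟩
  obtain ⟨L₀, hL0⟩ : ∃ L₀ : ℝ,
    L₀ = ∑ x₁ : G, ∑ x₂ : G, (if x₁ * x₂ ∈ A then f₀ x₁ * g₀ x₂ else 0) := ⟨_, rfl⟩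
  have hcb : L₀ ≤ nu G A * (Real.sqrt P * Real.sqrt Q) := by
    rw [hL0, hP, hQ]
    exact cross_bound A f₀ g₀ hsumf₀ hsumg₀
  have hfsq : ∑ x, f x ^ 2 = P + n * c ^ 2 := by
    have h1 : ∀ x : G, f x ^ 2 = f₀ x ^ 2 + (2*c) * f₀ x + c ^ 2 := by
      intro x; simp only [hf0]; ring
    rw [Finset.sum_congr rfl fun x _ => h1 x, Finset.sum_add_distrib, Finset.sum_add_distrib,
      ← Finset.mul_sum, hsumf₀, Finset.sum_const, Finset.card_univ, nsmul_eq_mul, ← hn, ← hP]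
    ring
  have hgsq : ∑ x, g x ^ 2 = Q + n * c ^ 2 := by
    have h1 : ∀ x : G, g x ^ 2 = g₀ x ^ 2 - (2*c) * g₀ x + c ^ 2 := by
      intro x; simp only [hg0]; ring
    rw [Finset.sum_congr rfl fun x _ => h1 x, Finset.sum_add_distrib, Finset.sum_sub_distrib,
      ← Finset.mul_sum, hsumg₀, Finset.sum_const, Finset.card_univ, nsmul_eq_mul, ← hn, ← hQ]
    ring
  -- reindex the energy
  have hEa : ∑ x₁ : G, ∑ x₂ : G, (if x₁ * x₂ ∈ A then (g x₂ - f x₁) ^ 2 else 0)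
      = ∑ x₁ : G, ∑ a ∈ A, (g (x₁⁻¹ * a) - f x₁) ^ 2 :=
    Finset.sum_congr rfl fun x₁ _ => inner_reindex A x₁ (fun x₂ => (g x₂ - f x₁) ^ 2)
  have hL₀a : L₀ = ∑ x₁ : G, f₀ x₁ * ∑ a ∈ A, g₀ (x₁⁻¹ * a) := by
    rw [hL0]
    refine Finset.sum_congr rfl fun x₁ _ => ?_
    rw [inner_reindex A x₁ (fun x₂ => f₀ x₁ * g₀ x₂), Finset.mul_sum]
  have hexp : ∀ x₁ a : G, (g (x₁⁻¹ * a) - f x₁) ^ 2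
      = f₀ x₁ ^ 2 + g₀ (x₁⁻¹ * a) ^ 2 - 2 * (f₀ x₁ * g₀ (x₁⁻¹ * a))
        - (4*c) * g₀ (x₁⁻¹ * a) + (4*c) * f₀ x₁ + 4 * c ^ 2 := by
    intro x₁ a; simp only [hf0, hg0]; ring
  have hrow : ∀ x₁ : G, ∑ a ∈ A, (g (x₁⁻¹ * a) - f x₁) ^ 2
      = (A.card : ℝ) * f₀ x₁ ^ 2 + (∑ a ∈ A, g₀ (x₁⁻¹ * a) ^ 2)
        - 2 * (f₀ x₁ * ∑ a ∈ A, g₀ (x₁⁻¹ * a))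
        - (4*c) * (∑ a ∈ A, g₀ (x₁⁻¹ * a)) + (4*c) * ((A.card : ℝ) * f₀ x₁)
        + (A.card : ℝ) * (4 * c ^ 2) := by
    intro x₁
    have t1 : ∑ _a ∈ A, f₀ x₁ ^ 2 = (A.card : ℝ) * f₀ x₁ ^ 2 := by
      rw [Finset.sum_const, nsmul_eq_mul]
    have t3 : ∑ a ∈ A, 2 * (f₀ x₁ * g₀ (x₁⁻¹ * a)) = 2 * (f₀ x₁ * ∑ a ∈ A, g₀ (x₁⁻¹ * a)) := by
      rw [Finset.mul_sum, Finset.mul_sum]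
    have t4 : ∑ a ∈ A, (4*c) * g₀ (x₁⁻¹ * a) = (4*c) * (∑ a ∈ A, g₀ (x₁⁻¹ * a)) :=
      (Finset.mul_sum _ _ _).symm
    have t5 : ∑ _a ∈ A, (4*c) * f₀ x₁ = (4*c) * ((A.card : ℝ) * f₀ x₁) := by
      rw [Finset.sum_const, nsmul_eq_mul]; ring
    have t6 : ∑ _a ∈ A, 4 * c ^ 2 = (A.card : ℝ) * (4 * c ^ 2) := by
      rw [Finset.sum_const, nsmul_eq_mul]
    rw [Finset.sum_congr rfl fun a _ => hexp x₁ a]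
    simp only [Finset.sum_add_distrib, Finset.sum_sub_distrib]
    rw [t1, t3, t4, t5, t6]
  have hEtot : ∑ x₁ : G, ∑ a ∈ A, (g (x₁⁻¹ * a) - f x₁) ^ 2
      = (A.card : ℝ) * P + (A.card : ℝ) * Q - 2 * L₀ + 4 * c ^ 2 * (n * (A.card : ℝ)) := by
    have u1 : ∑ x₁ : G, (A.card : ℝ) * f₀ x₁ ^ 2 = (A.card : ℝ) * P := by
      rw [hP]
      exact (Finset.mul_sum _ _ _).symm
    have u2 : ∑ x₁ : G, ∑ a ∈ A, g₀ (x₁⁻¹ * a) ^ 2 = (A.card : ℝ) * Q := by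
      rw [hQ]
      exact double_swap A (fun y => g₀ y ^ 2)
    have u3 : ∑ x₁ : G, 2 * (f₀ x₁ * ∑ a ∈ A, g₀ (x₁⁻¹ * a)) = 2 * L₀ := by
      rw [hL₀a, Finset.mul_sum]
    have u4 : ∑ x₁ : G, (4*c) * (∑ a ∈ A, g₀ (x₁⁻¹ * a)) = 0 := by
      rw [← Finset.mul_sum, double_swap A g₀, hsumg₀]
      ring
    have u5 : ∑ x₁ : G, (4*c) * ((A.card : ℝ) * f₀ x₁) = 0 := by
      rw [← Finset.mul_sum, ← Finset.mul_sum, hsumf₀]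
      ring
    have u6 : ∑ _x₁ : G, (A.card : ℝ) * (4 * c ^ 2) = n * ((A.card : ℝ) * (4 * c ^ 2)) := by
      rw [Finset.sum_const, Finset.card_univ, nsmul_eq_mul, ← hn]
    rw [Finset.sum_congr rfl fun x₁ _ => hrow x₁]
    simp only [Finset.sum_add_distrib, Finset.sum_sub_distrib]
    rw [u1, u2, u3, u4, u5, u6]
    ring
  have hPnn : 0 ≤ P := by
    rw [hP]; exact Finset.sum_nonneg fun x _ => sq_nonneg _
  have hQnn : 0 ≤ Q := by
    rw [hQ]; exact Finset.sum_nonneg fun x _ => sq_nonneg _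
  have hAM : 2 * (Real.sqrt P * Real.sqrt Q) ≤ P + Q := by
    nlinarith [sq_nonneg (Real.sqrt P - Real.sqrt Q), Real.sq_sqrt hPnn, Real.sq_sqrt hQnn]
  have hν : 0 ≤ nu G A := nu_nonneg A
  have hAnn : (0:ℝ) ≤ (A.card : ℝ) := Nat.cast_nonneg _
  have hgoalE : ∑ x₁ : G, ∑ x₂ : G, (if x₁ * x₂ ∈ A then (φ (1, x₂) - φ (0, x₁)) ^ 2 else 0)
      = (A.card : ℝ) * P + (A.card : ℝ) * Q - 2 * L₀ + 4 * c ^ 2 * (n * (A.card : ℝ)) := by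
    rw [show (∑ x₁ : G, ∑ x₂ : G, (if x₁ * x₂ ∈ A then (φ (1, x₂) - φ (0, x₁)) ^ 2 else 0))
      = ∑ x₁ : G, ∑ x₂ : G, (if x₁ * x₂ ∈ A then (g x₂ - f x₁) ^ 2 else 0) from rfl]
    rw [hEa, hEtot]
  rw [hgoalE, hsplit_sq, hfsq, hgsq]
  nlinarith [mul_le_mul_of_nonneg_left hAM hν, hcb,
    mul_nonneg (mul_nonneg hν hnpos.le) (sq_nonneg c),
    mul_nonneg (mul_nonneg hAnn hnpos.le) (sq_nonneg c)]

end Final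

end AuxProof

end BCC

open BCC

/-- **Proposition 11 (spectral gap of the bipartite Cayley graph).**  Let `G` be a finite
group and `∅ ≠ A ⊆ G`.  Then `λ₂(C_A) ≥ |A| - ν(A)`; equivalently (which is the form stated
here), for every `φ : {1,2} × G → ℝ` with `∑_v φ(v) = 0`,
`∑_{(x₁,x₂) : x₁x₂ ∈ A} (φ(2,x₂) - φ(1,x₁))² ≥ (|A| - ν(A))·∑_v φ(v)²`. -/
theorem cayley_graph_spectral_gap
    (G : Type) [Group G] [Fintype G] [DecidableEq G]
    (A : Finset G) (hA : A.Nonempty)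
    (φ : Fin 2 × G → ℝ) (hsum : ∑ v, φ v = 0) :
    ((A.card : ℝ) - nu G A) * ∑ v, φ v ^ 2 ≤
      ∑ x₁ : G, ∑ x₂ : G, if x₁ * x₂ ∈ A then (φ (1, x₂) - φ (0, x₁)) ^ 2 else 0 := by
  exact BCC.cayley_spectral_gap_main A φ hsum
end
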